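/- Let X be a finite nonempty record space, Θ an output type, n ≥ 1, and let M : (Fin n → X) → PMF Θ be a mechanism. Fix a prior π : PMF X, a loss function ℓ : X → X → ℝ≥0, a threshold η ≥ 0, and let κ = sup_{z0 ∈ X} Pr_{x ~ π}[ℓ(x, z0) ≤ η] be the baseline error. If M is ε-differentially private, then M is (η, γ)-AvgDistReRo with respect to π and ℓ for γ = exp(ε) · κ. -/

import Mathlib

open scoped ENNReal NNReal BigOperators
open Function

/-- Probability that the output of a PMF lands in a set. -/
noncomputable def pmfPr {Θ : Type*} (p : PMF Θ) (S : Set Θ) : ℝ≥0∞ :=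
  p.toOuterMeasure S

/-- Probability weight of a dataset `D` under `n` i.i.d. draws from the prior `π`. -/
noncomputable def iidWeight {X : Type*} {n : ℕ} (π : PMF X) (D : Fin n → X) : ℝ≥0∞ :=
  ∏ i, π (D i)

/-- `(η, γ)`-reconstruction robustness (ReRo): for every coordinate `i`, every fixing
of the other `n-1` records, and every adversary `A`, the probability over the target
`z ~ π` placed at coordinate `i` and `θ ~ M(D[i ↦ z])` that `ℓ z (A θ) ≤ η`
is at most `γ`. -/
def ReRo {X Θ : Type*} [Fintype X] {n : ℕ} (M : (Fin n → X) → PMF Θ)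
    (π : PMF X) (ℓ : X → X → ℝ≥0) (η : ℝ≥0) (γ : ℝ≥0∞) : Prop :=
  ∀ (i : Fin n) (D : Fin n → X) (A : Θ → X),
    ∑ z : X, π z * pmfPr (M (Function.update D i z)) {θ | ℓ z (A θ) ≤ η} ≤ γ

/-- `(η, γ)`-best-case distributional reconstruction robustness (BCDistReRo):
for every adversary `A`, the probability over `D ~ π^n` and `θ ~ M(D)` that the
minimum over coordinates `i` of `ℓ (D i) (A θ)` is at most `η` is bounded by `γ`. -/
def BCDistReRo {X Θ : Type*} [Fintype X] {n : ℕ} (M : (Fin n → X) → PMF Θ)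
    (π : PMF X) (ℓ : X → X → ℝ≥0) (η : ℝ≥0) (γ : ℝ≥0∞) : Prop :=
  ∀ A : Θ → X,
    ∑ D : Fin n → X, iidWeight π D * pmfPr (M D) {θ | ∃ i, ℓ (D i) (A θ) ≤ η} ≤ γ

/-- `(η, γ)`-average distributional reconstruction robustness (AvgDistReRo):
for every adversary `A`, the probability over `D ~ π^n`, `θ ~ M(D)`, and a uniformly
random index `i` that `ℓ (D i) (A θ) ≤ η` is at most `γ`. -/
def AvgDistReRo {X Θ : Type*} [Fintype X] {n : ℕ} (M : (Fin n → X) → PMF Θ)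
    (π : PMF X) (ℓ : X → X → ℝ≥0) (η : ℝ≥0) (γ : ℝ≥0∞) : Prop :=
  ∀ A : Θ → X,
    (n : ℝ≥0∞)⁻¹ * ∑ i : Fin n, ∑ D : Fin n → X,
      iidWeight π D * pmfPr (M D) {θ | ℓ (D i) (A θ) ≤ η} ≤ γ

/-- `ε`-differential privacy: on any pair of datasets differing in at most one
coordinate, the output distributions differ multiplicatively by at most `exp ε`. -/
def DiffPrivate {X Θ : Type*} {n : ℕ} (M : (Fin n → X) → PMF Θ) (ε : ℝ) : Prop :=
  ∀ x x' : Fin n → X, (∃ i : Fin n, ∀ j : Fin n, j ≠ i → x j = x' j) →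
    ∀ S : Set Θ, pmfPr (M x) S ≤ ENNReal.ofReal (Real.exp ε) * pmfPr (M x') S

/-- The baseline error `κ_{π,ℓ}(η) = sup_{z0} Pr_{x ~ π}[ℓ(x, z0) ≤ η]`. -/
noncomputable def baseline {X : Type*} (π : PMF X) (ℓ : X → X → ℝ≥0) (η : ℝ≥0) : ℝ≥0∞ :=
  ⨆ z0 : X, pmfPr π {x | ℓ x z0 ≤ η}

lemma key_lemma {X Θ : Type*} [Fintype X] (π : PMF X) (ℓ : X → X → ℝ≥0) (η : ℝ≥0)
    (p : PMF Θ) (A : Θ → X) :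
    ∑ z : X, π z * pmfPr p {θ | ℓ z (A θ) ≤ η} ≤ baseline π ℓ η := by
  have h1 : ∀ z : X, pmfPr p {θ | ℓ z (A θ) ≤ η}
      = ∑' θ, if ℓ z (A θ) ≤ η then p θ else 0 := by
    intro z
    rw [pmfPr, PMF.toOuterMeasure_apply]
    exact tsum_congr fun θ => by simp [Set.indicator]
  calc ∑ z : X, π z * pmfPr p {θ | ℓ z (A θ) ≤ η}
      = ∑ z : X, ∑' θ, π z * (if ℓ z (A θ) ≤ η then p θ else 0) := by
        simp_rw [h1, ENNReal.tsum_mul_left]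
    _ = ∑' θ, ∑ z : X, π z * (if ℓ z (A θ) ≤ η then p θ else 0) := by
        rw [← tsum_fintype (L := SummationFilter.unconditional _), ENNReal.tsum_comm]
        exact tsum_congr fun θ => tsum_fintype _
    _ = ∑' θ, p θ * ∑ z : X, (if ℓ z (A θ) ≤ η then π z else 0) := by
        congr 1; ext θ
        rw [Finset.mul_sum]
        congr 1; ext z
        by_cases h : ℓ z (A θ) ≤ η <;> simp [h, mul_comm]
    _ ≤ ∑' θ, p θ * baseline π ℓ η := by
        refine ENNReal.tsum_le_tsum fun θ => ?_
        refine mul_le_mul_right ?_ _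
        have : ∑ z : X, (if ℓ z (A θ) ≤ η then π z else 0)
            = pmfPr π {x | ℓ x (A θ) ≤ η} := by
          rw [pmfPr, PMF.toOuterMeasure_apply, tsum_fintype]
          exact Finset.sum_congr rfl fun z _ => by simp [Set.indicator]
        rw [this, baseline]
        exact le_iSup (fun z0 => pmfPr π {x | ℓ x z0 ≤ η}) (A θ)
    _ = baseline π ℓ η := by
        rw [ENNReal.tsum_mul_right, PMF.tsum_coe, one_mul]

/-- If `M` is `ε`-differentially private, then `M` is
`(η, exp ε · κ)`-AvgDistReRo, where `κ` is the baseline error. -/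
theorem dp_to_avgdistrero {X Θ : Type*} [Fintype X] [Nonempty X] {n : ℕ} (hn : 1 ≤ n)
    (M : (Fin n → X) → PMF Θ) (π : PMF X) (ℓ : X → X → ℝ≥0) (η : ℝ≥0) (ε : ℝ)
    (hM : DiffPrivate M ε) :
    AvgDistReRo M π ℓ η (ENNReal.ofReal (Real.exp ε) * baseline π ℓ η) := by
  intro A
  obtain ⟨x0⟩ := ‹Nonempty X›
  have hsum1 : ∑ x : X, (π x : ℝ≥0∞) = 1 := by
    rw [← tsum_fintype (L := SummationFilter.unconditional _)]; exact π.tsum_coe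
  -- per-coordinate bound
  have hcoord : ∀ i : Fin n,
      ∑ D : Fin n → X, iidWeight π D * pmfPr (M D) {θ | ℓ (D i) (A θ) ≤ η}
        ≤ ENNReal.ofReal (Real.exp ε) * baseline π ℓ η := by
    intro i
    set e := Equiv.funSplitAt i X with he
    -- step 1: DP bound
    have step1 : ∀ D : Fin n → X,
        pmfPr (M D) {θ | ℓ (D i) (A θ) ≤ η}
          ≤ ENNReal.ofReal (Real.exp ε) *
            pmfPr (M (Function.update D i x0)) {θ | ℓ (D i) (A θ) ≤ η} := by
      intro D
      exact hM D (Function.update D i x0)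
        ⟨i, fun j hj => (Function.update_of_ne hj x0 D).symm⟩ _
    calc ∑ D : Fin n → X, iidWeight π D * pmfPr (M D) {θ | ℓ (D i) (A θ) ≤ η}
        ≤ ∑ D : Fin n → X, iidWeight π D * (ENNReal.ofReal (Real.exp ε)
            * pmfPr (M (Function.update D i x0)) {θ | ℓ (D i) (A θ) ≤ η}) :=
          Finset.sum_le_sum fun D _ => mul_le_mul_right (step1 D) _
      _ = ENNReal.ofReal (Real.exp ε) * ∑ D : Fin n → X,
            iidWeight π D * pmfPr (M (Function.update D i x0)) {θ | ℓ (D i) (A θ) ≤ η} := by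
          rw [Finset.mul_sum]; congr 1; ext D; ring
      _ ≤ ENNReal.ofReal (Real.exp ε) * baseline π ℓ η := by
          refine mul_le_mul_right ?_ _
          -- reindex by e.symm
          have hre : ∑ D : Fin n → X,
              iidWeight π D * pmfPr (M (Function.update D i x0)) {θ | ℓ (D i) (A θ) ≤ η}
            = ∑ p : X × ({j : Fin n // j ≠ i} → X),
                (π p.1 * ∏ j, π (p.2 j)) *
                  pmfPr (M (e.symm (x0, p.2))) {θ | ℓ p.1 (A θ) ≤ η} := by
            rw [← Equiv.sum_comp e.symm]
            refine Finset.sum_congr rfl fun p _ => ?_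
            have hDi : e.symm p i = p.1 := by simp [he]
            have hupd : Function.update (e.symm p) i x0 = e.symm (x0, p.2) := by
              funext j
              by_cases h : j = i
              · subst h; simp [he]
              · simp [he, Function.update_of_ne h, h]
            have hw : iidWeight π (e.symm p) = π p.1 * ∏ j, π (p.2 j) := by
              rw [iidWeight, Fintype.prod_eq_mul_prod_compl i, hDi]
              congr 1
              rw [Finset.prod_subtype (p := fun j => j ≠ i) ({i}ᶜ : Finset (Fin n)) (fun j => by simp)
                (fun j => (π (e.symm p j) : ℝ≥0∞))]
              refine Finset.prod_congr rfl fun j _ => ?_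
              simp [he, dif_neg j.2]
            rw [hDi, hupd, hw]
          rw [hre, Fintype.sum_prod_type]
          calc ∑ z : X, ∑ E : {j : Fin n // j ≠ i} → X,
                (π z * ∏ j, π (E j)) * pmfPr (M (e.symm (x0, E))) {θ | ℓ z (A θ) ≤ η}
              = ∑ E : {j : Fin n // j ≠ i} → X, (∏ j, π (E j)) *
                  ∑ z : X, π z * pmfPr (M (e.symm (x0, E))) {θ | ℓ z (A θ) ≤ η} := by
                rw [Finset.sum_comm]
                refine Finset.sum_congr rfl fun E _ => ?_
                rw [Finset.mul_sum]
                refine Finset.sum_congr rfl fun z _ => by ring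
            _ ≤ ∑ E : {j : Fin n // j ≠ i} → X, (∏ j, π (E j)) * baseline π ℓ η :=
                Finset.sum_le_sum fun E _ =>
                  mul_le_mul_right (key_lemma π ℓ η (M (e.symm (x0, E))) A) _
            _ = baseline π ℓ η := by
                rw [← Finset.sum_mul]
                have : ∑ E : {j : Fin n // j ≠ i} → X, ∏ j, (π (E j) : ℝ≥0∞) = 1 := by
                  have h2 := Finset.prod_univ_sum
                    (fun _ : {j : Fin n // j ≠ i} => (Finset.univ : Finset X))
                    (fun _ x => (π x : ℝ≥0∞))
                  rw [Fintype.piFinset_univ] at h2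
                  rw [← h2]
                  simp [hsum1]
                rw [this, one_mul]
  calc (n : ℝ≥0∞)⁻¹ * ∑ i : Fin n, ∑ D : Fin n → X,
        iidWeight π D * pmfPr (M D) {θ | ℓ (D i) (A θ) ≤ η}
      ≤ (n : ℝ≥0∞)⁻¹ * ∑ _i : Fin n, ENNReal.ofReal (Real.exp ε) * baseline π ℓ η :=
        mul_le_mul_right (Finset.sum_le_sum fun i _ => hcoord i) _
    _ = (n : ℝ≥0∞)⁻¹ * (n * (ENNReal.ofReal (Real.exp ε) * baseline π ℓ η)) := by
        rw [Finset.sum_const, Finset.card_univ, Fintype.card_fin, nsmul_eq_mul]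
    _ = ENNReal.ofReal (Real.exp ε) * baseline π ℓ η := by
        rw [← mul_assoc, ENNReal.inv_mul_cancel, one_mul]
        · exact Nat.cast_ne_zero.mpr (by omega)
        · exact ENNReal.natCast_ne_top n
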